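/- Let μ ∈ ℍ be nonzero and let f₁, f₂, f₃, f₄ ∈ ℍ. If h^μ·f₁ + h^{μi}·f₂ + h^{μj}·f₃ + h^{μk}·f₄ = 0 for every h ∈ ℍ, then f₁ = f₂ = f₃ = f₄ = 0. -/

import Mathlib

open Quaternion Filter Topology Asymptotics

noncomputable section

/-- The imaginary unit `i` of the real quaternions. -/
def qI : ℍ[ℝ] := ⟨0, 1, 0, 0⟩
/-- The imaginary unit `j` of the real quaternions. -/
def qJ : ℍ[ℝ] := ⟨0, 0, 1, 0⟩
/-- The imaginary unit `k` of the real quaternions. -/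
def qK : ℍ[ℝ] := ⟨0, 0, 0, 1⟩

/-- Quaternion rotation `p ↦ μ p μ⁻¹`. -/
def qRot (μ p : ℍ[ℝ]) : ℍ[ℝ] := μ * p * μ⁻¹

/-- The left GHR derivative `∂f/∂q^μ` at `q`. -/
def lD (f : ℍ[ℝ] → ℍ[ℝ]) (μ q : ℍ[ℝ]) : ℍ[ℝ] :=
  (4 : ℍ[ℝ])⁻¹ * (fderiv ℝ f q 1 - fderiv ℝ f q qI * qRot μ qI
    - fderiv ℝ f q qJ * qRot μ qJ - fderiv ℝ f q qK * qRot μ qK)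

/-- The left conjugate GHR derivative `∂f/∂q^{μ*}` at `q`. -/
def lDc (f : ℍ[ℝ] → ℍ[ℝ]) (μ q : ℍ[ℝ]) : ℍ[ℝ] :=
  (4 : ℍ[ℝ])⁻¹ * (fderiv ℝ f q 1 + fderiv ℝ f q qI * qRot μ qI
    + fderiv ℝ f q qJ * qRot μ qJ + fderiv ℝ f q qK * qRot μ qK)

/-- The right GHR derivative `∂ᵣf/∂q^μ` at `q`. -/
def rD (f : ℍ[ℝ] → ℍ[ℝ]) (μ q : ℍ[ℝ]) : ℍ[ℝ] :=
  (4 : ℍ[ℝ])⁻¹ * (fderiv ℝ f q 1 - qRot μ qI * fderiv ℝ f q qI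
    - qRot μ qJ * fderiv ℝ f q qJ - qRot μ qK * fderiv ℝ f q qK)

/-- The right conjugate GHR derivative `∂ᵣf/∂q^{μ*}` at `q`. -/
def rDc (f : ℍ[ℝ] → ℍ[ℝ]) (μ q : ℍ[ℝ]) : ℍ[ℝ] :=
  (4 : ℍ[ℝ])⁻¹ * (fderiv ℝ f q 1 + qRot μ qI * fderiv ℝ f q qI
    + qRot μ qJ * fderiv ℝ f q qJ + qRot μ qK * fderiv ℝ f q qK)

@[simp] lemma qI_re : qI.re = 0 := rfl
@[simp] lemma qI_imI : qI.imI = 1 := rfl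
@[simp] lemma qI_imJ : qI.imJ = 0 := rfl
@[simp] lemma qI_imK : qI.imK = 0 := rfl
@[simp] lemma qJ_re : qJ.re = 0 := rfl
@[simp] lemma qJ_imI : qJ.imI = 0 := rfl
@[simp] lemma qJ_imJ : qJ.imJ = 1 := rfl
@[simp] lemma qJ_imK : qJ.imK = 0 := rfl
@[simp] lemma qK_re : qK.re = 0 := rfl
@[simp] lemma qK_imI : qK.imI = 0 := rfl
@[simp] lemma qK_imJ : qK.imJ = 0 := rfl
@[simp] lemma qK_imK : qK.imK = 1 := rfl
lemma qI_ne : qI ≠ 0 := by simp [Quaternion.ext_iff]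
lemma qJ_ne : qJ ≠ 0 := by simp [Quaternion.ext_iff]
lemma qK_ne : qK ≠ 0 := by simp [Quaternion.ext_iff]
lemma qI_inv : qI⁻¹ = -qI := by
  apply inv_eq_of_mul_eq_one_right; ext <;> simp
lemma qJ_inv : qJ⁻¹ = -qJ := by
  apply inv_eq_of_mul_eq_one_right; ext <;> simp
lemma qK_inv : qK⁻¹ = -qK := by
  apply inv_eq_of_mul_eq_one_right; ext <;> simp

lemma aux (μ : ℍ[ℝ]) (hμ : μ ≠ 0) (ν p f : ℍ[ℝ]) :
    μ⁻¹ * (μ * ν * p * (ν⁻¹ * μ⁻¹) * f) = ν * p * ν⁻¹ * (μ⁻¹ * f) := by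
  simp [mul_assoc, inv_mul_cancel_left₀ hμ]

lemma aux1 (μ : ℍ[ℝ]) (hμ : μ ≠ 0) (p f : ℍ[ℝ]) :
    μ⁻¹ * (μ * p * μ⁻¹ * f) = p * (μ⁻¹ * f) := by
  simp [mul_assoc, inv_mul_cancel_left₀ hμ]

set_option maxHeartbeats 1000000 in
theorem right_rotated_differentials_independent
    (μ : ℍ[ℝ]) (hμ : μ ≠ 0) (f₁ f₂ f₃ f₄ : ℍ[ℝ])
    (h : ∀ p : ℍ[ℝ], qRot μ p * f₁ + qRot (μ * qI) p * f₂
      + qRot (μ * qJ) p * f₃ + qRot (μ * qK) p * f₄ = 0) :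
    f₁ = 0 ∧ f₂ = 0 ∧ f₃ = 0 ∧ f₄ = 0 := by
  have key : ∀ p : ℍ[ℝ], p * (μ⁻¹ * f₁) + qI * p * qI⁻¹ * (μ⁻¹ * f₂)
      + qJ * p * qJ⁻¹ * (μ⁻¹ * f₃) + qK * p * qK⁻¹ * (μ⁻¹ * f₄) = 0 := by
    intro p
    have h0 := congrArg (fun x => μ⁻¹ * x) (h p)
    simp only [qRot, mul_inv_rev, mul_add, mul_zero] at h0
    rw [aux1 μ hμ, aux μ hμ, aux μ hμ, aux μ hμ] at h0
    exact h0
  set a := μ⁻¹ * f₁ with ha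
  set b := μ⁻¹ * f₂ with hb
  set c := μ⁻¹ * f₃ with hc
  set d := μ⁻¹ * f₄ with hd
  have e1 : a + b + c + d = 0 := by
    have := key 1
    rw [show qI * 1 * qI⁻¹ = 1 by rw [qI_inv]; ext <;> simp,
      show qJ * 1 * qJ⁻¹ = 1 by rw [qJ_inv]; ext <;> simp,
      show qK * 1 * qK⁻¹ = 1 by rw [qK_inv]; ext <;> simp, one_mul, one_mul,
      one_mul, one_mul] at this
    exact this
  have e2 : a + b - c - d = 0 := by
    have := key qI
    rw [show qI * qI * qI⁻¹ = qI by rw [qI_inv]; ext <;> simp,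
      show qJ * qI * qJ⁻¹ = -qI by rw [qJ_inv]; ext <;> simp,
      show qK * qI * qK⁻¹ = -qI by rw [qK_inv]; ext <;> simp] at this
    have h2 : qI * (a + b - c - d) = 0 := by rw [← this]; noncomm_ring
    exact mul_left_cancel₀ qI_ne (by rw [h2, mul_zero])
  have e3 : a - b + c - d = 0 := by
    have := key qJ
    rw [show qI * qJ * qI⁻¹ = -qJ by rw [qI_inv]; ext <;> simp,
      show qJ * qJ * qJ⁻¹ = qJ by rw [qJ_inv]; ext <;> simp,
      show qK * qJ * qK⁻¹ = -qJ by rw [qK_inv]; ext <;> simp] at this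
    have h2 : qJ * (a - b + c - d) = 0 := by rw [← this]; noncomm_ring
    exact mul_left_cancel₀ qJ_ne (by rw [h2, mul_zero])
  have e4 : a - b - c + d = 0 := by
    have := key qK
    rw [show qI * qK * qI⁻¹ = -qK by rw [qI_inv]; ext <;> simp,
      show qJ * qK * qJ⁻¹ = -qK by rw [qJ_inv]; ext <;> simp,
      show qK * qK * qK⁻¹ = qK by rw [qK_inv]; ext <;> simp] at this
    have h2 : qK * (a - b - c + d) = 0 := by rw [← this]; noncomm_ring
    exact mul_left_cancel₀ qK_ne (by rw [h2, mul_zero])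
  have half : ∀ x : ℍ[ℝ], x + x = 0 → x = 0 := by
    intro x hx
    have h2 : (2 : ℝ) • x = 0 := by rw [two_smul]; exact hx
    have := smul_eq_zero.mp h2
    rcases this with h | h
    · norm_num at h
    · exact h
  have hab : a + b = 0 := by
    apply half
    calc (a + b) + (a + b) = (a + b + c + d) + (a + b - c - d) := by abel
    _ = 0 := by rw [e1, e2, add_zero]
  have hamb : a - b = 0 := by
    apply half
    calc (a - b) + (a - b) = (a - b + c - d) + (a - b - c + d) := by abel
    _ = 0 := by rw [e3, e4, add_zero]
  have hcd : c + d = 0 := by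
    apply half
    calc (c + d) + (c + d) = (a + b + c + d) - (a + b - c - d) := by abel
    _ = 0 := by rw [e1, e2, sub_zero]
  have hcmd : c - d = 0 := by
    apply half
    calc (c - d) + (c - d) = (a - b + c - d) - (a - b - c + d) := by abel
    _ = 0 := by rw [e3, e4, sub_zero]
  have ha0 : a = 0 := by
    apply half; calc a + a = (a + b) + (a - b) := by abel
    _ = 0 := by rw [hab, hamb, add_zero]
  have hb0 : b = 0 := by
    apply half; calc b + b = (a + b) - (a - b) := by abel
    _ = 0 := by rw [hab, hamb, sub_zero]
  have hc0 : c = 0 := by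
    apply half; calc c + c = (c + d) + (c - d) := by abel
    _ = 0 := by rw [hcd, hcmd, add_zero]
  have hd0 : d = 0 := by
    apply half; calc d + d = (c + d) - (c - d) := by abel
    _ = 0 := by rw [hcd, hcmd, sub_zero]
  have fin : ∀ g : ℍ[ℝ], μ⁻¹ * g = 0 → g = 0 := by
    intro g hg
    have := congrArg (fun x => μ * x) hg
    simpa [mul_inv_cancel_left₀ hμ] using this
  exact ⟨fin f₁ (ha ▸ ha0), fin f₂ (hb ▸ hb0), fin f₃ (hc ▸ hc0), fin f₄ (hd ▸ hd0)⟩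


end
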